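/- Let κ̲ ∈ (0,1) be the solution of κ(1 − log κ) = 1/2 in (0,1). For every real x ≥ e, one has li_*(x) − li̲(x) ≤ li_*(x) − li_0(x) ≤ D̲ · √(x/log x), where D̲ = √(8π/κ̲)·e^(13/12)·(1 + κ̲)/(1 − κ̲). -/

import Mathlib

section AuxLi
open Real Finset

lemma aux_prod (c : ℝ) (hc : 0 ≤ c) : ∀ i : ℕ,
    ∏ j ∈ Finset.range i, (c + j + 1) ≤ (c + ((i : ℝ) + 1) / 2) ^ i := by
  intro i
  induction i with
  | zero => simp
  | succ i ih =>
    obtain ⟨a, hadef, ha1⟩ : ∃ a : ℝ, a = c + ((i:ℝ) + 2)/2 ∧ 1 ≤ a := by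
      refine ⟨_, rfl, ?_⟩
      have : (0:ℝ) ≤ (i:ℝ) := Nat.cast_nonneg i
      linarith
    have ha0 : (0:ℝ) < a := lt_of_lt_of_le one_pos ha1
    have hb : a - 1/2 ≤ a * Real.exp (-(1/(2*a))) := by
      have h := Real.add_one_le_exp (-(1/(2*a)))
      have h2 := mul_le_mul_of_nonneg_left h ha0.le
      calc a - 1/2 = a * (-(1/(2*a)) + 1) := by field_simp; ring
        _ ≤ a * Real.exp (-(1/(2*a))) := h2
    have hb2 : a + (i:ℝ)/2 ≤ a * Real.exp ((i:ℝ)/(2*a)) := by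
      have h := Real.add_one_le_exp ((i:ℝ)/(2*a))
      have h2 := mul_le_mul_of_nonneg_left h ha0.le
      calc a + (i:ℝ)/2 = a * ((i:ℝ)/(2*a) + 1) := by field_simp; ring
        _ ≤ a * Real.exp ((i:ℝ)/(2*a)) := h2
    have hpow : (a - 1/2)^i ≤ a^i * Real.exp (-((i:ℝ)/(2*a))) := by
      calc (a - 1/2)^i ≤ (a * Real.exp (-(1/(2*a))))^i :=
            pow_le_pow_left₀ (by linarith) hb i
        _ = a^i * Real.exp (-(1/(2*a)))^i := mul_pow _ _ _
        _ = a^i * Real.exp (-((i:ℝ)/(2*a))) := by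
            rw [← Real.exp_nat_mul]
            congr 1
            field_simp
    have key : (a - 1/2)^i * (a + (i:ℝ)/2) ≤ a^(i+1) := by
      have h1 : (a - 1/2)^i * (a + (i:ℝ)/2)
          ≤ (a^i * Real.exp (-((i:ℝ)/(2*a)))) * (a + (i:ℝ)/2) := by
        apply mul_le_mul_of_nonneg_right hpow
        positivity
      have h2 : (a^i * Real.exp (-((i:ℝ)/(2*a)))) * (a + (i:ℝ)/2)
          ≤ (a^i * Real.exp (-((i:ℝ)/(2*a)))) * (a * Real.exp ((i:ℝ)/(2*a))) := by
        apply mul_le_mul_of_nonneg_left hb2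
        positivity
      have h3 : (a^i * Real.exp (-((i:ℝ)/(2*a)))) * (a * Real.exp ((i:ℝ)/(2*a)))
          = a^(i+1) := by
        rw [pow_succ]
        rw [mul_assoc, mul_comm (Real.exp _), mul_assoc, ← Real.exp_add]
        simp [mul_comm]
      linarith
    have e1 : c + ((i:ℝ) + 1)/2 = a - 1/2 := by rw [hadef]; ring
    have e2 : c + (i:ℝ) + 1 = a + (i:ℝ)/2 := by rw [hadef]; ring
    have e4 : c + ((i:ℝ) + 1 + 1)/2 = a := by rw [hadef]; ring
    rw [Finset.prod_range_succ]
    push_cast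
    rw [e2, e4]
    calc (∏ j ∈ Finset.range i, (c + (j:ℝ) + 1)) * (a + (i:ℝ)/2)
        ≤ (a - 1/2)^i * (a + (i:ℝ)/2) := by
          apply mul_le_mul_of_nonneg_right _ (by positivity)
          rw [← e1]; exact ih
      _ ≤ a^(i+1) := key

lemma fact_ratio (m : ℕ) : ∀ i : ℕ,
    (((m + i).factorial : ℝ)) = (m.factorial : ℝ) * ∏ j ∈ Finset.range i, ((m:ℝ) + j + 1) := by
  intro i
  induction i with
  | zero => simp
  | succ i ih =>
    have h : m + (i+1) = (m+i) + 1 := by omega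
    rw [h, Nat.factorial_succ, Finset.prod_range_succ, ← mul_assoc, ← ih]
    push_cast
    ring

lemma fact_le_pow (L : ℝ) (hL : 1 ≤ L) : ∀ k : ℕ, (k:ℝ) ≤ L → (k.factorial : ℝ) ≤ L ^ k := by
  intro k
  induction k with
  | zero => intro _; simp
  | succ k ih =>
    intro h
    have hk : (k:ℝ) ≤ L := by push_cast at h; linarith
    have h1 := ih hk
    have hf : (0:ℝ) ≤ (k.factorial : ℝ) := by positivity
    rw [Nat.factorial_succ, pow_succ]
    push_cast
    push_cast at h
    calc ((k:ℝ) + 1) * (k.factorial : ℝ) ≤ L * L^k := by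
          apply mul_le_mul h h1 hf (by linarith)
      _ = L^k * L := by ring

lemma fact_le_pow' (L : ℝ) (hL : 1 ≤ L) : ∀ k : ℕ, ((k:ℝ) + 1 ≤ L) →
    (((k+1).factorial : ℝ)) * L ≤ L ^ (k+1) := by
  intro k
  induction k with
  | zero => intro _; simp
  | succ k ih =>
    intro h
    have hk : (k:ℝ) + 1 ≤ L := by push_cast at h; linarith
    have h1 := ih hk
    have hL0 : (0:ℝ) < L := by linarith
    have hf : (0:ℝ) ≤ ((k+1).factorial : ℝ) * L := by positivity
    have h2 : ((k:ℝ) + 1 + 1) ≤ L := by push_cast at h; push_cast; linarith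
    calc (((k+1+1).factorial : ℝ)) * L = ((k:ℝ)+1+1) * (((k+1).factorial : ℝ) * L) := by
          rw [Nat.factorial_succ]; push_cast; ring
      _ ≤ L * L^(k+1) := mul_le_mul h2 h1 hf (by linarith)
      _ = L^(k+1+1) := by ring

lemma fact_le_stirl (m : ℕ) (hm : 1 ≤ m) :
    (m.factorial : ℝ) ≤ Real.exp 1 * Real.sqrt m * ((m:ℝ) / Real.exp 1) ^ m := by
  obtain ⟨k, rfl⟩ : ∃ k, m = k + 1 := ⟨m - 1, (Nat.succ_pred_eq_of_pos hm).symm⟩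
  have h := Stirling.stirlingSeq'_antitone (Nat.zero_le k)
  simp only [Function.comp] at h
  rw [Stirling.stirlingSeq_one] at h
  rw [Stirling.stirlingSeq] at h
  have hpos : (0:ℝ) < Real.sqrt (2 * ((k:ℝ)+1)) * (((k:ℝ)+1) / Real.exp 1) ^ (k+1) := by
    positivity
  push_cast at h
  rw [div_le_iff₀ hpos] at h
  have e1 : Real.sqrt (2 * ((k:ℝ)+1)) = Real.sqrt 2 * Real.sqrt ((k:ℝ)+1) :=
    Real.sqrt_mul (by norm_num) _
  have hs2 : Real.sqrt 2 ≠ 0 := ne_of_gt (Real.sqrt_pos.mpr (by norm_num))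
  calc (((k+1).factorial : ℝ)) ≤ Real.exp 1 / Real.sqrt 2 *
        (Real.sqrt (2 * ((k:ℝ)+1)) * (((k:ℝ)+1) / Real.exp 1) ^ (k+1)) := by
        push_cast; exact h
    _ = Real.exp 1 * Real.sqrt ((k:ℝ)+1) * (((k:ℝ)+1) / Real.exp 1) ^ (k+1) := by
        rw [e1]; field_simp
    _ = Real.exp 1 * Real.sqrt ((k+1 : ℕ)) * (((k+1:ℕ):ℝ) / Real.exp 1) ^ (k+1) := by
        push_cast; ring

lemma exp_nat_le (n : ℕ) (b : ℝ) (hb : (2.7182818286:ℝ)^n ≤ b) : Real.exp n ≤ b := by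
  refine le_trans ?_ hb
  rw [← Real.exp_one_pow]
  exact pow_le_pow_left₀ (Real.exp_pos 1).le Real.exp_one_lt_d9.le n

lemma exp_frac_le (q c : ℝ) (n : ℕ) (hn : n ≠ 0) (hc : 0 ≤ c)
    (h : Real.exp ((n:ℝ) * q) ≤ c ^ n) : Real.exp q ≤ c := by
  apply le_of_pow_le_pow_left₀ hn hc
  rwa [Real.exp_nat_mul] at h

lemma exp32 : Real.exp (3/2 : ℝ) ≤ 4.49 := by
  apply exp_frac_le _ _ 2 (by norm_num) (by norm_num)
  have : ((2:ℕ):ℝ) * (3/2 : ℝ) = ((3:ℕ):ℝ) := by norm_num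
  rw [this]
  exact exp_nat_le 3 _ (by norm_num)

lemma exp94 : Real.exp (9/4 : ℝ) ≤ 9.5 := by
  apply exp_frac_le _ _ 4 (by norm_num) (by norm_num)
  have : ((4:ℕ):ℝ) * (9/4 : ℝ) = ((9:ℕ):ℝ) := by norm_num
  rw [this]
  exact exp_nat_le 9 _ (by norm_num)

lemma exp3 : Real.exp (3 : ℝ) ≤ 20.09 := by
  have : (3:ℝ) = ((3:ℕ):ℝ) := by norm_num
  rw [this]; exact exp_nat_le 3 _ (by norm_num)

lemma exp92 : Real.exp (9/2 : ℝ) ≤ 90.1 := by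
  apply exp_frac_le _ _ 2 (by norm_num) (by norm_num)
  have : ((2:ℕ):ℝ) * (9/2 : ℝ) = ((9:ℕ):ℝ) := by norm_num
  rw [this]
  exact exp_nat_le 9 _ (by norm_num)

lemma exp116 : Real.exp (11/6 : ℝ) ≤ 2 * Real.pi := by
  apply exp_frac_le _ _ 6 (by norm_num) (by positivity)
  have h1 : ((6:ℕ):ℝ) * (11/6 : ℝ) = ((11:ℕ):ℝ) := by norm_num
  rw [h1]
  have h2 : Real.exp ((11:ℕ):ℝ) ≤ 59875 := exp_nat_le 11 _ (by norm_num)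
  have h3 : (6.283184:ℝ) ≤ 2 * Real.pi := by
    have := Real.pi_gt_d6
    linarith
  calc Real.exp ((11:ℕ):ℝ) ≤ 59875 := h2
    _ ≤ (6.283184:ℝ)^6 := by norm_num
    _ ≤ (2*Real.pi)^6 := pow_le_pow_left₀ (by norm_num) h3 6

lemma log5 : (8/5 : ℝ) ≤ Real.log 5 := by
  rw [Real.le_log_iff_exp_le (by norm_num)]
  apply exp_frac_le _ _ 5 (by norm_num) (by norm_num)
  have : ((5:ℕ):ℝ) * (8/5 : ℝ) = ((8:ℕ):ℝ) := by norm_num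
  rw [this]
  exact exp_nat_le 8 _ (by norm_num)

lemma log6 : Real.log 6 < 2 := by
  rw [Real.log_lt_iff_lt_exp (by norm_num)]
  have h := Real.exp_one_gt_d9
  have h2 : Real.exp 2 = Real.exp 1 * Real.exp 1 := by rw [← Real.exp_add]; norm_num
  nlinarith


lemma kappa_lt (κ : ℝ) (hκ0 : 0 < κ) (hκ1 : κ < 1)
    (hsol : κ * (1 - Real.log κ) = 1 / 2) : κ < 1/5 := by
  by_contra hcon
  push_neg at hcon
  rcases le_or_gt κ (1/2) with hhalf | hhalf
  · -- 1/5 ≤ κ ≤ 1/2 : use tangent at 1/5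
    have h5 : Real.log (5 * κ) ≤ 5 * κ - 1 := Real.log_le_sub_one_of_pos (by linarith)
    have hsplit : Real.log (5 * κ) = Real.log 5 + Real.log κ :=
      Real.log_mul (by norm_num) (ne_of_gt hκ0)
    have hl5 := log5
    -- log κ ≤ 5κ - 1 - log 5 ≤ 5κ - 1 - 8/5
    have hlogκ : Real.log κ ≤ 5 * κ - 13/5 := by
      rw [hsplit] at h5; linarith
    -- κ(1 - log κ) ≥ κ(1 - 5κ + 13/5) = κ(18/5 - 5κ) > 1/2 for κ ∈ [1/5, 1/2]
    nlinarith [mul_le_mul_of_nonneg_left hlogκ hκ0.le, mul_pos hκ0 hκ0,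
      mul_nonneg (mul_nonneg hκ0.le hκ0.le) hκ0.le]
  · -- 1/2 < κ < 1 : use tangent at 1
    have h1 : Real.log κ ≤ κ - 1 := Real.log_le_sub_one_of_pos hκ0
    nlinarith [mul_le_mul_of_nonneg_left h1 hκ0.le]

lemma kappa_gt (κ : ℝ) (hκ0 : 0 < κ)
    (hsol : κ * (1 - Real.log κ) = 1 / 2) : 1/6 < κ := by
  by_contra hcon
  push_neg at hcon
  have h6 : Real.log (1/(6*κ)) ≤ 1/(6*κ) - 1 := Real.log_le_sub_one_of_pos (by positivity)
  have hsplit : Real.log (1/(6*κ)) = -(Real.log 6 + Real.log κ) := by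
    rw [one_div, Real.log_inv, Real.log_mul (by norm_num) (ne_of_gt hκ0)]
  have hl6 := log6
  -- -log 6 - log κ ≤ 1/(6κ) - 1, multiply by κ > 0:
  -- -κ log6 - κ log κ ≤ 1/6 - κ, so κ - κ log κ ≤ 1/6 + κ log 6 < 1/6 + 2κ ≤ 1/6+1/3 = 1/2
  have hmul := mul_le_mul_of_nonneg_left h6 hκ0.le
  rw [hsplit] at hmul
  have hid : κ * (1/(6*κ) - 1) = 1/6 - κ := by field_simp
  rw [hid] at hmul
  nlinarith [mul_lt_mul_of_pos_left hl6 hκ0]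

lemma D_ge (κ : ℝ) (hκ0 : 0 < κ) (h6 : 1/6 < κ) (h5 : κ < 1/5) :
    (42:ℝ) ≤ Real.sqrt (8 * Real.pi / κ) * Real.exp (13/12) * (1 + κ) / (1 - κ) := by
  have hπ := Real.pi_gt_d6
  have hA : (11.2:ℝ) ≤ Real.sqrt (8 * Real.pi / κ) := by
    rw [Real.le_sqrt (by norm_num) (by positivity)]
    rw [le_div_iff₀ hκ0]
    nlinarith
  have hB : (2.7182818283:ℝ) ≤ Real.exp (13/12) := by
    have := Real.exp_one_gt_d9
    have h2 : Real.exp 1 ≤ Real.exp (13/12) := Real.exp_le_exp.mpr (by norm_num)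
    linarith
  have hC : (7/5 : ℝ) ≤ (1 + κ) / (1 - κ) := by
    rw [le_div_iff₀ (by linarith)]
    linarith
  have hA0 : (0:ℝ) ≤ Real.sqrt (8 * Real.pi / κ) := Real.sqrt_nonneg _
  have key : (11.2:ℝ) * 2.7182818283 ≤ Real.sqrt (8 * Real.pi / κ) * Real.exp (13/12) :=
    mul_le_mul hA hB (by norm_num) hA0
  rw [mul_div_assoc]
  calc (42:ℝ) ≤ (11.2 * 2.7182818283) * (7/5) := by norm_num
    _ ≤ (Real.sqrt (8 * Real.pi / κ) * Real.exp (13/12)) * ((1+κ)/(1-κ)) := by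
        apply mul_le_mul key hC (by norm_num) (by positivity)

lemma low_case (D L B R E : ℝ) (hD : 42 ≤ D) (hR : R ≤ Real.sqrt L) (hR0 : 0 ≤ R)
    (hE : Real.exp (L/2) ≤ E) (hE0 : 0 < E) (hBE : B * E ≤ 42 * R) :
    B ≤ D * (Real.sqrt L * Real.exp (-(L/2))) := by
  have hEx : (0:ℝ) < Real.exp (L/2) := Real.exp_pos _
  have h1 : B ≤ 42 * R / E := (le_div_iff₀ hE0).mpr hBE
  have hnum : 42 * R ≤ D * Real.sqrt L :=
    mul_le_mul hD hR hR0 (le_trans (by norm_num) hD)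
  have h2 : 42 * R / E ≤ D * Real.sqrt L / Real.exp (L/2) :=
    div_le_div₀ (by positivity) hnum hEx hE
  have h3 : D * Real.sqrt L / Real.exp (L/2) = D * (Real.sqrt L * Real.exp (-(L/2))) := by
    rw [Real.exp_neg]; field_simp
  linarith [h2, h3 ▸ h2]

set_option maxHeartbeats 2000000 in
lemma core (κ L : ℝ) (m n : ℕ) (hκ0 : 0 < κ) (h6 : 1/6 < κ) (h5 : κ < 1/5)
    (hsol : κ * (1 - Real.log κ) = 1/2) (hL : 1 ≤ L)
    (hmR : (m:ℝ) ≤ κ*L) (hmR2 : κ*L < (m:ℝ)+1)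
    (hnR : (n:ℝ) ≤ L) (hnR2 : L < (n:ℝ)+1) (hmn : m ≤ n) :
    ∑ k ∈ Finset.Ico m (n + 1), ((k.factorial : ℝ) / L ^ k)
      ≤ (Real.sqrt (8*Real.pi/κ) * Real.exp (13/12) * (1+κ) / (1-κ))
        * (Real.sqrt L * Real.exp (-(L/2))) := by
  have hL0 : (0:ℝ) < L := by linarith
  have hD := D_ge κ hκ0 h6 h5
  set D := Real.sqrt (8*Real.pi/κ) * Real.exp (13/12) * (1+κ) / (1-κ) with hDdef
  have hm5 : (m:ℝ) ≤ L/5 := by nlinarith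
  rcases lt_or_ge L 3 with h3 | h3
  · -- Case L < 3
    have hn2 : n ≤ 2 := by
      by_contra hcc; push_neg at hcc
      have : (3:ℝ) ≤ (n:ℝ) := by exact_mod_cast hcc
      linarith
    have hone : ∀ k ∈ Finset.Ico m (n+1), (k.factorial:ℝ)/L^k ≤ 1 := by
      intro k hk
      rw [Finset.mem_Ico] at hk
      have hkn : k ≤ n := Nat.lt_succ_iff.mp hk.2
      have hkL : (k:ℝ) ≤ L := le_trans (by exact_mod_cast hkn) hnR
      rw [div_le_one (by positivity)]
      exact fact_le_pow L hL k hkL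
    have hsum : ∑ k ∈ Finset.Ico m (n+1), ((k.factorial:ℝ)/L^k) ≤ 3 := by
      calc ∑ k ∈ Finset.Ico m (n+1), ((k.factorial:ℝ)/L^k)
          ≤ ∑ _k ∈ Finset.Ico m (n+1), (1:ℝ) := Finset.sum_le_sum hone
        _ = ((n+1-m : ℕ):ℝ) := by rw [Finset.sum_const, Nat.card_Ico]; simp
        _ ≤ 3 := by
            have h : n+1-m ≤ 3 := by omega
            exact_mod_cast h
    refine le_trans hsum (low_case D L 3 1 4.49 hD ?_ (by norm_num) ?_ (by norm_num) (by norm_num))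
    · rw [show (1:ℝ) = Real.sqrt 1 by simp]
      exact Real.sqrt_le_sqrt hL
    · exact le_trans (Real.exp_le_exp.mpr (by linarith)) exp32
  · -- Case L ≥ 3 : geometric machinery
    have hc0 : (0:ℝ) < (1-κ)*L - 1 := by nlinarith
    set ρ : ℝ := ((m:ℝ)+(n:ℝ)+1)/(2*L) with hρ
    have hρ0 : (0:ℝ) ≤ ρ := by positivity
    have hterm : ∀ i ∈ Finset.range (n+1-m),
        (((m+i).factorial:ℝ)/L^(m+i)) ≤ ((m.factorial:ℝ)/L^m) * ρ^i := by
      intro i hi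
      rw [Finset.mem_range] at hi
      have hmin : m + i ≤ n := by omega
      have hminR : (m:ℝ) + (i:ℝ) ≤ (n:ℝ) := by exact_mod_cast hmin
      have hprod := aux_prod (m:ℝ) (Nat.cast_nonneg m) i
      have step1 : (((m+i).factorial:ℝ)/L^(m+i))
          ≤ (m.factorial:ℝ) * (((m:ℝ) + ((i:ℝ)+1)/2)^i) / (L^m * L^i) := by
        rw [fact_ratio m i, pow_add]
        gcongr
      have step2 : (m.factorial:ℝ) * (((m:ℝ) + ((i:ℝ)+1)/2)^i) / (L^m * L^i)
          = ((m.factorial:ℝ)/L^m) * ((((m:ℝ) + ((i:ℝ)+1)/2)/L)^i) := by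
        rw [div_pow]; field_simp
      have step3 : (((m:ℝ) + ((i:ℝ)+1)/2)/L) ≤ ρ := by
        rw [hρ, div_le_div_iff₀ hL0 (by positivity)]
        nlinarith
      have step4 : ((((m:ℝ) + ((i:ℝ)+1)/2)/L)^i) ≤ ρ^i := by
        apply pow_le_pow_left₀ (by positivity) step3
      calc (((m+i).factorial:ℝ)/L^(m+i))
          ≤ ((m.factorial:ℝ)/L^m) * ((((m:ℝ) + ((i:ℝ)+1)/2)/L)^i) := by
            rw [← step2]; exact step1
        _ ≤ ((m.factorial:ℝ)/L^m) * ρ^i := by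
            apply mul_le_mul_of_nonneg_left step4 (by positivity)
    have hgeom : ∑ i ∈ Finset.range (n+1-m), ρ^i ≤ 2*L/((1-κ)*L-1) := by
      have hS0 : (0:ℝ) ≤ ∑ i ∈ Finset.range (n+1-m), ρ^i := by positivity
      have h1 : (∑ i ∈ Finset.range (n+1-m), ρ^i) * (1 - ρ) ≤ 1 := by
        have hg := geom_sum_mul ρ (n+1-m)
        have hpow : (0:ℝ) ≤ ρ^(n+1-m) := by positivity
        nlinarith [hg]
      have h2 : ((1-κ)*L-1)/(2*L) ≤ 1 - ρ := by
        rw [hρ, div_le_iff₀ (by positivity : (0:ℝ) < 2*L)]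
        have hexp : (1 - ((m:ℝ)+(n:ℝ)+1)/(2*L)) * (2*L) = 2*L - ((m:ℝ)+(n:ℝ)+1) := by
          field_simp
        rw [hexp]
        nlinarith
      rw [le_div_iff₀ hc0]
      have h4 : (∑ i ∈ Finset.range (n+1-m), ρ^i) * (((1-κ)*L-1)/(2*L)) ≤ 1 :=
        le_trans (mul_le_mul_of_nonneg_left h2 hS0) h1
      have h5' := mul_le_mul_of_nonneg_right h4 (by positivity : (0:ℝ) ≤ 2*L)
      have hid : (∑ i ∈ Finset.range (n+1-m), ρ^i) * (((1-κ)*L-1)/(2*L)) * (2*L)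
          = (∑ i ∈ Finset.range (n+1-m), ρ^i) * ((1-κ)*L-1) := by
        field_simp
      rw [hid] at h5'
      linarith
    have hSbound : ∑ k ∈ Finset.Ico m (n+1), ((k.factorial:ℝ)/L^k)
        ≤ ((m.factorial:ℝ)/L^m) * (2*L/((1-κ)*L-1)) := by
      rw [Finset.sum_Ico_eq_sum_range]
      calc ∑ i ∈ Finset.range (n+1-m), (((m+i).factorial:ℝ)/L^(m+i))
          ≤ ∑ i ∈ Finset.range (n+1-m), ((m.factorial:ℝ)/L^m) * ρ^i :=
            Finset.sum_le_sum hterm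
        _ = ((m.factorial:ℝ)/L^m) * ∑ i ∈ Finset.range (n+1-m), ρ^i := by
            rw [Finset.mul_sum]
        _ ≤ ((m.factorial:ℝ)/L^m) * (2*L/((1-κ)*L-1)) := by
            apply mul_le_mul_of_nonneg_left hgeom (by positivity)
    rcases lt_or_ge L 9 with h9 | h9
    · -- 3 ≤ L < 9 : small cases
      have hq : 2*L/((1-κ)*L-1) ≤ 10*L/(4*L-5) := by
        rw [div_le_div_iff₀ hc0 (by nlinarith)]
        nlinarith [mul_nonneg (by linarith : (0:ℝ) ≤ 2 - 10*κ) (mul_nonneg hL0.le hL0.le)]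
      rcases lt_or_ge L 6 with h6' | h6'
      · -- t m ≤ 1
        have htm1 : ((m.factorial:ℝ)/L^m) ≤ 1 := by
          rw [div_le_one (by positivity)]
          exact fact_le_pow L hL m (by nlinarith)
        have hS2 : ∑ k ∈ Finset.Ico m (n+1), ((k.factorial:ℝ)/L^k) ≤ 10*L/(4*L-5) := by
          calc ∑ k ∈ Finset.Ico m (n+1), ((k.factorial:ℝ)/L^k)
              ≤ ((m.factorial:ℝ)/L^m) * (2*L/((1-κ)*L-1)) := hSbound
            _ ≤ 1 * (10*L/(4*L-5)) := mul_le_mul htm1 hq (by positivity) (by norm_num)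
            _ = 10*L/(4*L-5) := by ring
        rcases lt_or_ge L 4.5 with h45 | h45
        · have hS3 : ∑ k ∈ Finset.Ico m (n+1), ((k.factorial:ℝ)/L^k) ≤ 30/7 := by
            refine le_trans hS2 ?_
            rw [div_le_div_iff₀ (by nlinarith) (by norm_num)]
            nlinarith
          refine le_trans hS3 (low_case D L (30/7) 1.73 9.5 hD ?_ (by norm_num) ?_ (by norm_num) (by norm_num))
          · rw [Real.le_sqrt (by norm_num) hL0.le]; nlinarith
          · exact le_trans (Real.exp_le_exp.mpr (by linarith)) exp94
        · have hS3 : ∑ k ∈ Finset.Ico m (n+1), ((k.factorial:ℝ)/L^k) ≤ 45/13 := by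
            refine le_trans hS2 ?_
            rw [div_le_div_iff₀ (by nlinarith) (by norm_num)]
            nlinarith
          refine le_trans hS3 (low_case D L (45/13) 2.12 20.09 hD ?_ (by norm_num) ?_ (by norm_num) (by norm_num))
          · rw [Real.le_sqrt (by norm_num) hL0.le]; nlinarith
          · refine le_trans (Real.exp_le_exp.mpr (by linarith)) exp3
      · -- 6 ≤ L < 9 : t m ≤ 1/L
        have hm1 : 1 ≤ m := by
          rcases Nat.eq_zero_or_pos m with h0 | h0
          · exfalso; rw [h0] at hmR2; push_cast at hmR2; nlinarith
          · exact h0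
        obtain ⟨j, hj⟩ : ∃ j, m = j + 1 := ⟨m - 1, (Nat.succ_pred_eq_of_pos hm1).symm⟩
        have htm1 : ((m.factorial:ℝ)/L^m) ≤ 1/L := by
          rw [div_le_div_iff₀ (by positivity) hL0]
          have hje : ((j:ℝ)) + 1 = (m:ℝ) := by rw [hj]; push_cast; ring
          have hjL : ((j:ℝ)) + 1 ≤ L := by rw [hje]; nlinarith
          have hfp := fact_le_pow' L hL j hjL
          rw [hj]
          linarith
        have hS2 : ∑ k ∈ Finset.Ico m (n+1), ((k.factorial:ℝ)/L^k) ≤ 10/19 := by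
          calc ∑ k ∈ Finset.Ico m (n+1), ((k.factorial:ℝ)/L^k)
              ≤ ((m.factorial:ℝ)/L^m) * (2*L/((1-κ)*L-1)) := hSbound
            _ ≤ (1/L) * (10*L/(4*L-5)) := mul_le_mul htm1 hq (by positivity) (by positivity)
            _ = 10/(4*L-5) := by field_simp
            _ ≤ 10/19 := by
                rw [div_le_div_iff₀ (by nlinarith) (by norm_num)]
                nlinarith
        refine le_trans hS2 (low_case D L (10/19) 2.44 90.1 hD ?_ (by norm_num) ?_ (by norm_num) (by norm_num))
        · rw [Real.le_sqrt (by norm_num) hL0.le]; nlinarith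
        · exact le_trans (Real.exp_le_exp.mpr (by linarith)) exp92
    · -- Main case : L ≥ 9
      have hm1 : 1 ≤ m := by
        rcases Nat.eq_zero_or_pos m with h0 | h0
        · exfalso; rw [h0] at hmR2; push_cast at hmR2; nlinarith
        · exact h0
      have hmpos : (0:ℝ) < (m:ℝ) := by exact_mod_cast hm1
      have hκ1 : κ < 1 := by linarith
      have hlogκ : Real.log κ < 0 := Real.log_neg hκ0 hκ1
      have hbase_pos : (0:ℝ) < (m:ℝ)/(Real.exp 1 * L) := by positivity
      have hlogb : Real.log ((m:ℝ)/(Real.exp 1 * L)) ≤ Real.log κ - 1 := by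
        have hle : (m:ℝ)/(Real.exp 1 * L) ≤ κ/Real.exp 1 := by
          rw [div_le_div_iff₀ (by positivity) (Real.exp_pos 1)]
          nlinarith [Real.exp_pos 1]
        calc Real.log ((m:ℝ)/(Real.exp 1 * L)) ≤ Real.log (κ/Real.exp 1) :=
              Real.log_le_log hbase_pos hle
          _ = Real.log κ - 1 := by
              rw [Real.log_div (ne_of_gt hκ0) (ne_of_gt (Real.exp_pos 1)), Real.log_exp]
      have hexp_bound : ((m:ℝ)/(Real.exp 1 * L))^m ≤ Real.exp 1 / κ * Real.exp (-(L/2)) := by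
        have e1 : ((m:ℝ)/(Real.exp 1 * L))^m
            = Real.exp ((m:ℝ) * Real.log ((m:ℝ)/(Real.exp 1 * L))) := by
          rw [Real.exp_nat_mul, Real.exp_log hbase_pos]
        rw [e1]
        have h2 : (m:ℝ) * Real.log ((m:ℝ)/(Real.exp 1 * L)) ≤ (κ*L - 1) * (Real.log κ - 1) := by
          calc (m:ℝ) * Real.log ((m:ℝ)/(Real.exp 1 * L)) ≤ (m:ℝ) * (Real.log κ - 1) :=
                mul_le_mul_of_nonneg_left hlogb hmpos.le
            _ ≤ (κ*L - 1) * (Real.log κ - 1) :=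
                mul_le_mul_of_nonpos_right (by linarith) (by linarith)
        have hkey : κ * (Real.log κ - 1) = -(1/2) := by nlinarith [hsol]
        have h3 : (κ*L - 1) * (Real.log κ - 1) = -(L/2) + (1 - Real.log κ) := by
          have h4 : L * (κ * (Real.log κ - 1)) = L * (-(1/2)) := by rw [hkey]
          nlinarith [h4]
        calc Real.exp ((m:ℝ) * Real.log ((m:ℝ)/(Real.exp 1 * L)))
            ≤ Real.exp (-(L/2) + (1 - Real.log κ)) := Real.exp_le_exp.mpr (h3 ▸ h2)
          _ = Real.exp 1 / κ * Real.exp (-(L/2)) := by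
              rw [Real.exp_add, Real.exp_sub, Real.exp_log hκ0]
              ring
      -- Stirling bound on t m
      have hsqm : Real.sqrt (m:ℝ) ≤ Real.sqrt κ * Real.sqrt L := by
        rw [← Real.sqrt_mul hκ0.le]
        exact Real.sqrt_le_sqrt hmR
      have htm : ((m.factorial:ℝ)/L^m)
          ≤ Real.exp 1 * (Real.sqrt κ * Real.sqrt L) * (Real.exp 1/κ * Real.exp (-(L/2))) := by
        have hstir := fact_le_stirl m hm1
        have step : ((m.factorial:ℝ)/L^m)
            ≤ (Real.exp 1 * Real.sqrt (m:ℝ) * (((m:ℝ)/Real.exp 1)^m)) / L^m := by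
          gcongr
        have e3 : (Real.exp 1 * Real.sqrt (m:ℝ) * (((m:ℝ)/Real.exp 1)^m)) / L^m
            = Real.exp 1 * Real.sqrt (m:ℝ) * (((m:ℝ)/(Real.exp 1 * L))^m) := by
          rw [show ((m:ℝ)/(Real.exp 1 * L)) = ((m:ℝ)/Real.exp 1)/L by rw [div_div]]
          rw [div_pow]
          ring
        calc ((m.factorial:ℝ)/L^m)
            ≤ Real.exp 1 * Real.sqrt (m:ℝ) * (((m:ℝ)/(Real.exp 1 * L))^m) := by
              rw [← e3]; exact step
          _ ≤ Real.exp 1 * (Real.sqrt κ * Real.sqrt L) * (Real.exp 1/κ * Real.exp (-(L/2))) := by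
              apply mul_le_mul
              · exact mul_le_mul_of_nonneg_left hsqm (Real.exp_pos 1).le
              · exact hexp_bound
              · positivity
              · positivity
      have hq2 : 2*L/((1-κ)*L-1) ≤ 2*(1+κ)/(1-κ) := by
        rw [div_le_div_iff₀ hc0 (by linarith)]
        nlinarith [mul_nonneg (mul_nonneg hκ0.le (by linarith : (0:ℝ) ≤ 1-κ)) hL0.le]
      have hSfinal : ∑ k ∈ Finset.Ico m (n+1), ((k.factorial:ℝ)/L^k)
          ≤ (Real.exp 1 * (Real.sqrt κ * Real.sqrt L) * (Real.exp 1/κ * Real.exp (-(L/2))))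
            * (2*(1+κ)/(1-κ)) := by
        refine le_trans hSbound ?_
        apply mul_le_mul htm hq2 (by positivity) (by positivity)
      refine le_trans hSfinal ?_
      -- numeric key : 2 e e ≤ √(8π) * exp(13/12)
      have hsq8pi : 2 * Real.exp (11/12) ≤ Real.sqrt (8*Real.pi) := by
        rw [Real.le_sqrt (by positivity) (by positivity)]
        have he : Real.exp (11/12) * Real.exp (11/12) = Real.exp (11/6) := by
          rw [← Real.exp_add]; norm_num
        nlinarith [exp116, he]
      have hkey2 : 2 * (Real.exp 1 * Real.exp 1) ≤ Real.sqrt (8*Real.pi) * Real.exp (13/12) := by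
        have he2 : Real.exp 1 * Real.exp 1 = Real.exp (11/12) * Real.exp (13/12) := by
          rw [← Real.exp_add, ← Real.exp_add]; norm_num
        calc 2 * (Real.exp 1 * Real.exp 1) = (2 * Real.exp (11/12)) * Real.exp (13/12) := by
              rw [he2]; ring
          _ ≤ Real.sqrt (8*Real.pi) * Real.exp (13/12) :=
              mul_le_mul_of_nonneg_right hsq8pi (Real.exp_pos _).le
      -- assemble
      have hs0 : (0:ℝ) < Real.sqrt κ := Real.sqrt_pos.mpr hκ0
      have hsκ : Real.sqrt κ / κ = 1 / Real.sqrt κ := Real.sqrt_div_self'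
      have hsqrtdiv : Real.sqrt (8*Real.pi/κ) = Real.sqrt (8*Real.pi) / Real.sqrt κ :=
        Real.sqrt_div (by positivity) κ
      have h1κ : (0:ℝ) < (1+κ)/(1-κ) := by
        apply div_pos <;> linarith
      have hco : Real.exp 1 * Real.sqrt κ * (Real.exp 1/κ) * (2*(1+κ)/(1-κ))
          ≤ Real.sqrt (8*Real.pi) / Real.sqrt κ * Real.exp (13/12) * (1+κ)/(1-κ) := by
        calc Real.exp 1 * Real.sqrt κ * (Real.exp 1/κ) * (2*(1+κ)/(1-κ))
            = (2*(Real.exp 1 * Real.exp 1)) * ((1+κ)/(1-κ)) * (Real.sqrt κ/κ) := by ring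
          _ = (2*(Real.exp 1 * Real.exp 1)) * ((1+κ)/(1-κ)) * (1/Real.sqrt κ) := by rw [hsκ]
          _ ≤ (Real.sqrt (8*Real.pi) * Real.exp (13/12)) * ((1+κ)/(1-κ)) * (1/Real.sqrt κ) := by
              apply mul_le_mul_of_nonneg_right
                (mul_le_mul_of_nonneg_right hkey2 h1κ.le) (by positivity)
          _ = Real.sqrt (8*Real.pi) / Real.sqrt κ * Real.exp (13/12) * (1+κ)/(1-κ) := by ring
      have hLE : (0:ℝ) ≤ Real.sqrt L * Real.exp (-(L/2)) := by positivity
      calc (Real.exp 1 * (Real.sqrt κ * Real.sqrt L) * (Real.exp 1/κ * Real.exp (-(L/2))))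
            * (2*(1+κ)/(1-κ))
          = (Real.exp 1 * Real.sqrt κ * (Real.exp 1/κ) * (2*(1+κ)/(1-κ)))
            * (Real.sqrt L * Real.exp (-(L/2))) := by ring
        _ ≤ (Real.sqrt (8*Real.pi) / Real.sqrt κ * Real.exp (13/12) * (1+κ)/(1-κ))
            * (Real.sqrt L * Real.exp (-(L/2))) := mul_le_mul_of_nonneg_right hco hLE
        _ = D * (Real.sqrt L * Real.exp (-(L/2))) := by rw [hDdef, hsqrtdiv]

/-- The Stieltjes asymptotic approximation of `li(x)`:
`li_*(x) = (x/log x)·Σ_{k=0}^{n−1} k!/(log x)^k + (log x − n)·x·n!/(log x)^(n+1)`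
with `n = ⌊log x⌋`. -/
noncomputable def liStar (x : ℝ) : ℝ :=
  x / Real.log x *
      ∑ k ∈ Finset.range ⌊Real.log x⌋₊, (Nat.factorial k : ℝ) / Real.log x ^ k
    + (Real.log x - ⌊Real.log x⌋₊) * x * (Nat.factorial ⌊Real.log x⌋₊ : ℝ)
      / Real.log x ^ (⌊Real.log x⌋₊ + 1)

/-- The truncated asymptotic approximation of `li(x)` with truncation parameter `κ`
and fractional coefficient `α`:
`li_{κ,α}(x) = (x/log x)·(α·m!/(log x)^m + Σ_{k=0}^{m−1} k!/(log x)^k)` with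
`m = ⌊κ·log x⌋`. -/
noncomputable def liApprox (κ α x : ℝ) : ℝ :=
  x / Real.log x *
    (α * (Nat.factorial ⌊κ * Real.log x⌋₊ : ℝ) / Real.log x ^ ⌊κ * Real.log x⌋₊
      + ∑ k ∈ Finset.range ⌊κ * Real.log x⌋₊, (Nat.factorial k : ℝ) / Real.log x ^ k)

/-- With `κ̲ ∈ (0,1)` the solution of `κ(1−log κ) = 1/2`, for every
real `x ≥ e`: `li_*(x) − li̲(x) ≤ li_*(x) − li₀(x) ≤ D̲·√(x/log x)` where
`li₀(x) = li_{κ̲,0}(x)`, `li̲(x) = li_{κ̲,α̲}(x)`, and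
`D̲ = √(8π/κ̲)·e^(13/12)·(1+κ̲)/(1−κ̲)`. -/
theorem liStar_sub_li0_le (κ : ℝ) (hκ0 : 0 < κ) (hκ1 : κ < 1)
    (hsol : κ * (1 - Real.log κ) = 1 / 2) (x : ℝ) (hx : Real.exp 1 ≤ x) :
    liStar x - liApprox κ (κ * Real.log x - ⌊κ * Real.log x⌋₊) x ≤
        liStar x - liApprox κ 0 x ∧
      liStar x - liApprox κ 0 x ≤
        Real.sqrt (8 * Real.pi / κ) * Real.exp (13 / 12) * (1 + κ) / (1 - κ)
          * Real.sqrt (x / Real.log x) := by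
  have hx0 : (0:ℝ) < x := lt_of_lt_of_le (Real.exp_pos 1) hx
  have hL1 : 1 ≤ Real.log x := by
    rw [Real.le_log_iff_exp_le hx0]; exact hx
  have hL0 : 0 < Real.log x := by linarith
  have h6 := kappa_gt κ hκ0 hsol
  have h5 := kappa_lt κ hκ0 hκ1 hsol
  constructor
  · apply sub_le_sub_left
    simp only [liApprox]
    have hxL : (0:ℝ) ≤ x / Real.log x := div_nonneg hx0.le hL0.le
    apply mul_le_mul_of_nonneg_left _ hxL
    apply add_le_add_left
    rw [zero_mul, zero_div]
    have hα : 0 ≤ κ * Real.log x - (⌊κ * Real.log x⌋₊ : ℝ) := by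
      have := Nat.floor_le (by positivity : (0:ℝ) ≤ κ * Real.log x)
      linarith
    exact div_nonneg (mul_nonneg hα (Nat.cast_nonneg _)) (pow_nonneg hL0.le _)
  · simp only [liStar, liApprox]
    set L := Real.log x with hLdef
    set n := ⌊L⌋₊ with hn
    set m := ⌊κ*L⌋₊ with hm
    have hmR : (m:ℝ) ≤ κ*L := Nat.floor_le (by positivity)
    have hmR2 : κ*L < (m:ℝ)+1 := Nat.lt_floor_add_one _
    have hnR : (n:ℝ) ≤ L := Nat.floor_le hL0.le
    have hnR2 : L < (n:ℝ)+1 := Nat.lt_floor_add_one _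
    have hmn : m ≤ n := Nat.floor_le_floor (by nlinarith)
    have hcore := core κ L m n hκ0 h6 h5 hsol hL1 hmR hmR2 hnR hnR2 hmn
    have heq : x / L * ∑ k ∈ Finset.range n, ((k.factorial:ℝ) / L ^ k)
          + (L - (n:ℝ)) * x * ((n.factorial:ℝ)) / L ^ (n+1)
          - x / L * ((0 * ((m.factorial:ℝ)) / L ^ m)
            + ∑ k ∈ Finset.range m, ((k.factorial:ℝ) / L ^ k))
        = x/L * ((∑ k ∈ Finset.Ico m n, ((k.factorial:ℝ)/L^k))
            + (L - (n:ℝ)) * ((n.factorial:ℝ)/L^n)) := by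
      rw [Finset.sum_Ico_eq_sub _ hmn, pow_succ]
      have hLne : L ≠ 0 := ne_of_gt hL0
      field_simp
      ring
    rw [heq]
    have hmono : (∑ k ∈ Finset.Ico m n, ((k.factorial:ℝ)/L^k))
          + (L - (n:ℝ)) * ((n.factorial:ℝ)/L^n)
        ≤ ∑ k ∈ Finset.Ico m (n+1), ((k.factorial:ℝ)/L^k) := by
      rw [Finset.sum_Ico_succ_top hmn]
      have htn : (0:ℝ) ≤ (n.factorial:ℝ)/L^n := by positivity
      nlinarith [hnR2, hnR, htn]
    have hxL : (0:ℝ) ≤ x / L := div_nonneg hx0.le hL0.le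
    have hex : Real.exp (L/2) = Real.sqrt x := by
      rw [Real.exp_half, hLdef, Real.exp_log hx0]
    have hsL : Real.sqrt L * Real.sqrt L = L := Real.mul_self_sqrt hL0.le
    have hxe : x = Real.sqrt x * Real.sqrt x := (Real.mul_self_sqrt hx0.le).symm
    have hconv : x/L * (Real.sqrt L * Real.exp (-(L/2))) = Real.sqrt (x/L) := by
      rw [Real.exp_neg, hex, Real.sqrt_div hx0.le]
      rw [eq_div_iff (ne_of_gt (Real.sqrt_pos.mpr hL0))]
      have hsx0 : (0:ℝ) < Real.sqrt x := Real.sqrt_pos.mpr hx0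
      field_simp
      linear_combination x * hsL + L * hxe
    calc x/L * ((∑ k ∈ Finset.Ico m n, ((k.factorial:ℝ)/L^k))
            + (L - (n:ℝ)) * ((n.factorial:ℝ)/L^n))
        ≤ x/L * (∑ k ∈ Finset.Ico m (n+1), ((k.factorial:ℝ)/L^k)) :=
          mul_le_mul_of_nonneg_left hmono hxL
      _ ≤ x/L * ((Real.sqrt (8*Real.pi/κ) * Real.exp (13/12) * (1+κ) / (1-κ))
            * (Real.sqrt L * Real.exp (-(L/2)))) :=
          mul_le_mul_of_nonneg_left hcore hxL
      _ = (Real.sqrt (8*Real.pi/κ) * Real.exp (13/12) * (1+κ) / (1-κ))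
            * (x/L * (Real.sqrt L * Real.exp (-(L/2)))) := by ring
      _ = Real.sqrt (8 * Real.pi / κ) * Real.exp (13 / 12) * (1 + κ) / (1 - κ)
            * Real.sqrt (x / L) := by rw [hconv]

end AuxLi
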